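/- Let n ≥ 2 and consider the n-th Engel-type algebra with basis {X, Y_1,...,Y_n} of V_1 satisfying the defining relations. For ν ∈ V_1 \ {0}, the conditions ad_ν(V_1) = V_2 and ad_ν^2(V_1) = V_3 hold if and only if ν ∉ span{Y_1,...,Y_n} ∪ ℝX. -/

import Mathlib

abbrev EngelVec (n : ℕ) : Type := ℝ × (Fin n → ℝ) × (Fin n → ℝ) × ℝ
noncomputable def engelBracket (n : ℕ) (u v : EngelVec n) : EngelVec n :=
  (0, 0,
    fun i => u.2.1 i * v.1 - v.2.1 i * u.1,
    ∑ i : Fin n, (u.2.1 i * v.2.2.1 i - v.2.1 i * u.2.2.1 i))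

noncomputable instance (n : ℕ) : LieRing (EngelVec n) :=
  { (inferInstance : AddCommGroup (EngelVec n)) with
    bracket := engelBracket n
    add_lie := by
      intro x y z
      refine Prod.ext ?_ (Prod.ext ?_ (Prod.ext ?_ ?_)) <;>
        first
          | (simp [engelBracket]; done)
          | (funext i; simp [engelBracket]; done)
          | (funext i; simp [engelBracket]; ring)
          | (simp [engelBracket, mul_add, add_mul, Finset.sum_sub_distrib,
              Finset.sum_add_distrib]; ring)
    lie_add := by
      intro x y z
      refine Prod.ext ?_ (Prod.ext ?_ (Prod.ext ?_ ?_)) <;>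
        first
          | (simp [engelBracket]; done)
          | (funext i; simp [engelBracket]; done)
          | (funext i; simp [engelBracket]; ring)
          | (simp [engelBracket, mul_add, add_mul, Finset.sum_sub_distrib,
              Finset.sum_add_distrib]; ring)
    lie_self := by
      intro x
      refine Prod.ext ?_ (Prod.ext ?_ (Prod.ext ?_ ?_)) <;>
        first
          | (simp [engelBracket]; done)
          | (funext i; simp [engelBracket]; done)
          | (funext i; simp [engelBracket]; ring)
          | (simp [engelBracket]; ring)
    leibniz_lie := by
      intro x y z
      refine Prod.ext ?_ (Prod.ext ?_ (Prod.ext ?_ ?_)) <;>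
        first
          | (simp [engelBracket]; done)
          | (funext i; simp [engelBracket]; done)
          | (funext i; simp [engelBracket]; ring)
          | (simp [engelBracket, mul_sub, sub_mul, mul_comm, mul_left_comm,
              Finset.sum_sub_distrib]; ring) }

noncomputable instance (n : ℕ) : LieAlgebra ℝ (EngelVec n) :=
  { (inferInstance : Module ℝ (EngelVec n)) with
    lie_smul := by
      intro c x y
      refine Prod.ext ?_ (Prod.ext ?_ (Prod.ext ?_ ?_)) <;>
        first
          | (simp [Bracket.bracket, engelBracket]; done)
          | (funext i; simp [Bracket.bracket, engelBracket]; ring)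
          | (simp [Bracket.bracket, engelBracket, mul_sub, mul_add, Finset.mul_sum,
              mul_comm, mul_left_comm, Finset.sum_sub_distrib];
             exact Finset.sum_congr rfl fun i _ => by ring) }

noncomputable def engelX (n : ℕ) : EngelVec n := (1, 0, 0, 0)
noncomputable def engelY (n : ℕ) (i : Fin n) : EngelVec n := (0, Pi.single i 1, 0, 0)
noncomputable def engelT (n : ℕ) (i : Fin n) : EngelVec n := (0, 0, Pi.single i 1, 0)
noncomputable def engelZ (n : ℕ) : EngelVec n := (0, 0, 0, 1)

/-- The first layer `V₁ = span{X, Y₁, …, Yₙ}` of the `n`-th Engel-type algebra. -/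
noncomputable def engelV1 (n : ℕ) : Submodule ℝ (EngelVec n) :=
  Submodule.span ℝ ({engelX n} ∪ Set.range (engelY n))

/-- The second layer `V₂ = span{T₁, …, Tₙ}`. -/
noncomputable def engelV2 (n : ℕ) : Submodule ℝ (EngelVec n) :=
  Submodule.span ℝ (Set.range (engelT n))

/-- The third layer `V₃ = ℝZ`. -/
noncomputable def engelV3 (n : ℕ) : Submodule ℝ (EngelVec n) :=
  Submodule.span ℝ {engelZ n}

/-- The subspace `span{Y₁, …, Yₙ}` of the first layer. -/
noncomputable def engelYspan (n : ℕ) : Submodule ℝ (EngelVec n) :=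
  Submodule.span ℝ (Set.range (engelY n))

namespace EngelAux

open Submodule

variable {n : ℕ}

lemma bracket_def (u v : EngelVec n) : ⁅u, v⁆ = engelBracket n u v := rfl

/-- Vectors with vanishing last two components. -/
noncomputable def lastZero (n : ℕ) : Submodule ℝ (EngelVec n) where
  carrier := {v | v.2.2.1 = 0 ∧ v.2.2.2 = 0}
  add_mem' := by
    rintro u v ⟨h1, h2⟩ ⟨h3, h4⟩
    exact ⟨by simp [Prod.snd_add, Prod.fst_add, h1, h3], by simp [Prod.snd_add, h2, h4]⟩
  zero_mem' := ⟨rfl, rfl⟩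
  smul_mem' := by
    rintro c v ⟨h1, h2⟩
    exact ⟨by simp [Prod.smul_snd, Prod.smul_fst, h1], by simp [Prod.smul_snd, h2]⟩

lemma rep1 (a : ℝ) (b : Fin n → ℝ) :
    ((a, b, 0, 0) : EngelVec n) = a • engelX n + ∑ i, b i • engelY n i := by
  refine Prod.ext ?_ (Prod.ext ?_ (Prod.ext ?_ ?_)) <;>
    simp [engelX, engelY, Prod.fst_sum, Prod.snd_sum]
  funext j
  rw [Finset.sum_apply]
  simp [Pi.single_apply]

lemma repT (e : Fin n → ℝ) :
    ((0, 0, e, 0) : EngelVec n) = ∑ i, e i • engelT n i := by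
  refine Prod.ext ?_ (Prod.ext ?_ (Prod.ext ?_ ?_)) <;>
    simp [engelT, Prod.fst_sum, Prod.snd_sum]
  funext j
  rw [Finset.sum_apply]
  simp [Pi.single_apply]

lemma mem_V1_iff (v : EngelVec n) : v ∈ engelV1 n ↔ v.2.2.1 = 0 ∧ v.2.2.2 = 0 := by
  constructor
  · intro hv
    have hle : engelV1 n ≤ lastZero n := by
      rw [engelV1, span_le]
      rintro w (rfl | ⟨i, rfl⟩)
      · exact ⟨rfl, rfl⟩
      · exact ⟨rfl, rfl⟩
    exact hle hv
  · rintro ⟨h1, h2⟩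
    have hv : v = (v.1, v.2.1, 0, 0) := by
      refine Prod.ext rfl (Prod.ext rfl (Prod.ext h1 h2))
    rw [hv, rep1]
    exact add_mem (smul_mem _ _ (subset_span (Or.inl rfl)))
      (sum_mem fun i _ => smul_mem _ _ (subset_span (Or.inr ⟨i, rfl⟩)))

noncomputable def fstLastZero (n : ℕ) : Submodule ℝ (EngelVec n) where
  carrier := {v | v.1 = 0 ∧ v.2.2.1 = 0 ∧ v.2.2.2 = 0}
  add_mem' := by
    rintro u v ⟨h0, h1, h2⟩ ⟨h3, h4, h5⟩
    refine ⟨?_, ?_, ?_⟩ <;> simp [Prod.snd_add, Prod.fst_add, h0, h1, h2, h3, h4, h5]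
  zero_mem' := ⟨rfl, rfl, rfl⟩
  smul_mem' := by
    rintro c v ⟨h0, h1, h2⟩
    refine ⟨?_, ?_, ?_⟩ <;> simp [Prod.smul_snd, Prod.smul_fst, h0, h1, h2]

lemma mem_Yspan_iff (v : EngelVec n) :
    v ∈ engelYspan n ↔ v.1 = 0 ∧ v.2.2.1 = 0 ∧ v.2.2.2 = 0 := by
  constructor
  · intro hv
    have hle : engelYspan n ≤ fstLastZero n := by
      rw [engelYspan, span_le]
      rintro w ⟨i, rfl⟩
      exact ⟨rfl, rfl, rfl⟩
    exact hle hv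
  · rintro ⟨h0, h1, h2⟩
    have hv : v = (0, v.2.1, 0, 0) := by
      refine Prod.ext h0 (Prod.ext rfl (Prod.ext h1 h2))
    rw [hv, rep1]
    refine add_mem ?_ (sum_mem fun i _ => smul_mem _ _ (subset_span ⟨i, rfl⟩))
    simp

lemma mem_Xspan_iff (v : EngelVec n) :
    v ∈ Submodule.span ℝ {engelX n} ↔ v.2.1 = 0 ∧ v.2.2.1 = 0 ∧ v.2.2.2 = 0 := by
  rw [mem_span_singleton]
  constructor
  · rintro ⟨c, rfl⟩
    exact ⟨by simp [engelX], by simp [engelX], by simp [engelX]⟩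
  · rintro ⟨h0, h1, h2⟩
    refine ⟨v.1, ?_⟩
    refine Prod.ext (by simp [engelX]) (Prod.ext ?_ (Prod.ext ?_ ?_)) <;>
      simp [engelX, h0, h1, h2]

lemma mem_V2_iff (v : EngelVec n) :
    v ∈ engelV2 n ↔ v.1 = 0 ∧ v.2.1 = 0 ∧ v.2.2.2 = 0 := by
  constructor
  · intro hv
    have hle : engelV2 n ≤
        { carrier := {v : EngelVec n | v.1 = 0 ∧ v.2.1 = 0 ∧ v.2.2.2 = 0}
          add_mem' := by
            rintro u v ⟨h0, h1, h2⟩ ⟨h3, h4, h5⟩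
            refine ⟨?_, ?_, ?_⟩ <;>
              simp [Prod.snd_add, Prod.fst_add, h0, h1, h2, h3, h4, h5]
          zero_mem' := ⟨rfl, rfl, rfl⟩
          smul_mem' := by
            rintro c v ⟨h0, h1, h2⟩
            refine ⟨?_, ?_, ?_⟩ <;> simp [Prod.smul_snd, Prod.smul_fst, h0, h1, h2] } := by
      rw [engelV2, span_le]
      rintro w ⟨i, rfl⟩
      exact ⟨rfl, rfl, rfl⟩
    exact hle hv
  · rintro ⟨h0, h1, h2⟩
    have hv : v = (0, 0, v.2.2.1, 0) :=
      Prod.ext h0 (Prod.ext h1 (Prod.ext rfl h2))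
    rw [hv, repT]
    exact sum_mem fun i _ => smul_mem _ _ (subset_span ⟨i, rfl⟩)

lemma mem_V3_iff (v : EngelVec n) :
    v ∈ engelV3 n ↔ v.1 = 0 ∧ v.2.1 = 0 ∧ v.2.2.1 = 0 := by
  rw [engelV3, mem_span_singleton]
  constructor
  · rintro ⟨c, rfl⟩
    exact ⟨by simp [engelZ], by simp [engelZ], by simp [engelZ]⟩
  · rintro ⟨h0, h1, h2⟩
    refine ⟨v.2.2.2, ?_⟩
    refine Prod.ext ?_ (Prod.ext ?_ (Prod.ext ?_ ?_)) <;>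
      simp [engelZ, h0, h1, h2]

end EngelAux

/-- For `n ≥ 2` and `ν ∈ V₁ \ {0}` in the `n`-th Engel-type algebra, the conditions
`ad_ν(V₁) = V₂` and `ad_ν²(V₁) = V₃` hold if and only if
`ν ∉ span{Y₁,…,Yₙ} ∪ ℝX` (characterization of non-abnormal horizontal lines). -/
theorem engel_nonabnormal_lines (n : ℕ) (hn : 2 ≤ n) (ν : EngelVec n)
    (hν : ν ∈ engelV1 n) (hν0 : ν ≠ 0) :
    (Submodule.span ℝ {w : EngelVec n | ∃ v ∈ engelV1 n, ⁅ν, v⁆ = w} = engelV2 n ∧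
     Submodule.span ℝ {w : EngelVec n | ∃ v ∈ engelV1 n, ⁅ν, ⁅ν, v⁆⁆ = w} = engelV3 n) ↔
    ν ∉ ((engelYspan n : Set (EngelVec n)) ∪ (Submodule.span ℝ {engelX n} : Set (EngelVec n))) := by
  classical
  obtain ⟨h1, h2⟩ := (EngelAux.mem_V1_iff ν).1 hν
  set a := ν.1 with ha'
  set b := ν.2.1 with hb'
  have hRHS : (ν ∉ ((engelYspan n : Set (EngelVec n)) ∪
      (Submodule.span ℝ {engelX n} : Set (EngelVec n)))) ↔ (a ≠ 0 ∧ b ≠ 0) := by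
    simp only [Set.mem_union, not_or, SetLike.mem_coe]
    constructor
    · rintro ⟨hY, hX⟩
      exact ⟨fun h0 => hY ((EngelAux.mem_Yspan_iff ν).2 ⟨h0, h1, h2⟩),
             fun h0 => hX ((EngelAux.mem_Xspan_iff ν).2 ⟨h0, h1, h2⟩)⟩
    · rintro ⟨hA, hB⟩
      exact ⟨fun h => hA ((EngelAux.mem_Yspan_iff ν).1 h).1,
             fun h => hB ((EngelAux.mem_Xspan_iff ν).1 h).1⟩
  have hbr : ∀ v : EngelVec n, v ∈ engelV1 n →
      ⁅ν, v⁆ = (0, 0, fun j => b j * v.1 - v.2.1 j * a, 0) := by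
    intro v hv
    obtain ⟨hv1, hv2⟩ := (EngelAux.mem_V1_iff v).1 hv
    rw [EngelAux.bracket_def]
    refine Prod.ext rfl (Prod.ext rfl (Prod.ext rfl ?_))
    simp [engelBracket, hv1, h1]
  have hbr2 : ∀ v : EngelVec n, v ∈ engelV1 n →
      ⁅ν, ⁅ν, v⁆⁆ = (0, 0, 0, ∑ i, b i * (b i * v.1 - v.2.1 i * a)) := by
    intro v hv
    rw [hbr v hv, EngelAux.bracket_def]
    refine Prod.ext rfl (Prod.ext rfl (Prod.ext ?_ ?_))
    · funext j; simp [engelBracket]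
    · simp [engelBracket, h1]; rfl
  have hcond1 : (Submodule.span ℝ {w : EngelVec n | ∃ v ∈ engelV1 n, ⁅ν, v⁆ = w}
      = engelV2 n) ↔ a ≠ 0 := by
    constructor
    · intro hs haz
      set i0 : Fin n := ⟨0, by omega⟩ with hi0
      set i1 : Fin n := ⟨1, by omega⟩ with hi1
      have hne : i1 ≠ i0 := by simp [hi0, hi1, Fin.ext_iff]
      have hle : Submodule.span ℝ {w : EngelVec n | ∃ v ∈ engelV1 n, ⁅ν, v⁆ = w}
          ≤ Submodule.span ℝ {((0, 0, b, 0) : EngelVec n)} := by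
        rw [Submodule.span_le]
        rintro w ⟨v, hv, rfl⟩
        rw [hbr v hv]
        refine Submodule.mem_span_singleton.2 ⟨v.1, ?_⟩
        refine Prod.ext (by simp) (Prod.ext (by simp) (Prod.ext ?_ (by simp)))
        funext j
        simp [haz]
        ring
      have key : ∀ i : Fin n, ∃ t : ℝ, ∀ j, t * b j = (Pi.single i 1 : Fin n → ℝ) j := by
        intro i
        have hTm : engelT n i ∈ Submodule.span ℝ {((0, 0, b, 0) : EngelVec n)} := by
          apply hle
          rw [hs]
          exact Submodule.subset_span ⟨i, rfl⟩
        obtain ⟨t, ht⟩ := Submodule.mem_span_singleton.1 hTm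
        refine ⟨t, fun j => ?_⟩
        have := congrArg (fun w : EngelVec n => w.2.2.1 j) ht
        simpa [engelT] using this
      obtain ⟨t, ht⟩ := key i0
      obtain ⟨u, hu⟩ := key i1
      have e1 := ht i0
      have e2 := ht i1
      have e3 := hu i0
      have e4 := hu i1
      simp only [Pi.single_apply, if_pos rfl] at e1 e4
      rw [Pi.single_eq_of_ne hne] at e2
      rw [Pi.single_eq_of_ne hne.symm] at e3
      have hcontra : (t * b i0) * (u * b i1) = (t * b i1) * (u * b i0) := by ring
      rw [e1, e2, e3, e4] at hcontra
      norm_num at hcontra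
    · intro hA
      refine le_antisymm ?_ ?_
      · rw [Submodule.span_le]
        rintro w ⟨v, hv, rfl⟩
        rw [hbr v hv]
        exact (EngelAux.mem_V2_iff _).2 ⟨rfl, rfl, rfl⟩
      · rw [engelV2, Submodule.span_le]
        rintro w ⟨i, rfl⟩
        apply Submodule.subset_span
        refine ⟨(0, fun j => -(a⁻¹) * (Pi.single i 1 : Fin n → ℝ) j, 0, 0),
          (EngelAux.mem_V1_iff _).2 ⟨rfl, rfl⟩, ?_⟩
        rw [hbr _ ((EngelAux.mem_V1_iff _).2 ⟨rfl, rfl⟩)]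
        refine Prod.ext rfl (Prod.ext rfl (Prod.ext ?_ rfl))
        funext j
        show b j * 0 - (-(a⁻¹) * (Pi.single i 1 : Fin n → ℝ) j) * a = (Pi.single i 1 : Fin n → ℝ) j
        field_simp
        ring
  have hcond2 : (Submodule.span ℝ {w : EngelVec n | ∃ v ∈ engelV1 n, ⁅ν, ⁅ν, v⁆⁆ = w}
      = engelV3 n) ↔ b ≠ 0 := by
    constructor
    · intro hs hbz
      have hle : Submodule.span ℝ {w : EngelVec n | ∃ v ∈ engelV1 n, ⁅ν, ⁅ν, v⁆⁆ = w}
          ≤ ⊥ := by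
        rw [Submodule.span_le]
        rintro w ⟨v, hv, rfl⟩
        rw [hbr2 v hv]
        simp only [SetLike.mem_coe, Submodule.mem_bot]
        refine Prod.ext rfl (Prod.ext rfl (Prod.ext rfl ?_))
        simp [hbz]
      have hz : engelZ n ∈ (⊥ : Submodule ℝ (EngelVec n)) := by
        apply hle
        rw [hs]
        exact Submodule.subset_span rfl
      rw [Submodule.mem_bot] at hz
      exact one_ne_zero (congrArg (fun w : EngelVec n => w.2.2.2) hz)
    · intro hB
      have hsum : (∑ i, b i * b i) ≠ 0 := by
        intro h0
        apply hB
        funext i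
        exact mul_self_eq_zero.1
          ((Finset.sum_eq_zero_iff_of_nonneg (fun i _ => mul_self_nonneg (b i))).1 h0 i
            (Finset.mem_univ i))
      refine le_antisymm ?_ ?_
      · rw [Submodule.span_le]
        rintro w ⟨v, hv, rfl⟩
        rw [hbr2 v hv]
        exact (EngelAux.mem_V3_iff _).2 ⟨rfl, rfl, rfl⟩
      · rw [engelV3, Submodule.span_le]
        intro w hw
        rw [Set.mem_singleton_iff] at hw
        subst hw
        have hX1 : engelX n ∈ engelV1 n := Submodule.subset_span (Or.inl rfl)
        have hw0 : ((0, 0, 0, ∑ i, b i * b i) : EngelVec n) ∈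
            Submodule.span ℝ {w : EngelVec n | ∃ v ∈ engelV1 n, ⁅ν, ⁅ν, v⁆⁆ = w} := by
          apply Submodule.subset_span
          refine ⟨engelX n, hX1, ?_⟩
          rw [hbr2 _ hX1]
          refine Prod.ext rfl (Prod.ext rfl (Prod.ext rfl ?_))
          simp [engelX]
        have hez : engelZ n = (∑ i, b i * b i)⁻¹ • ((0, 0, 0, ∑ i, b i * b i) : EngelVec n) := by
          refine Prod.ext (by simp [engelZ]) (Prod.ext (by simp [engelZ])
            (Prod.ext (by simp [engelZ]) ?_))
          simp [engelZ, inv_mul_cancel₀ hsum]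
        rw [SetLike.mem_coe, hez]
        exact Submodule.smul_mem _ _ hw0
  rw [hRHS, hcond1, hcond2]
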